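/- Suppose t_a : M(ℝ) → C(ℝ) satisfies strict fifoness: whenever h₁ < h₂ and Y([h₁,h₂]) ≠ 0, then h₁ + t_a(Y)(h₁) < h₂ + t_a(Y)(h₂). Define H_a(Y)(h) := h + t_a(Y)(h). Let Y' be a measure with Y' ≤ Y, let h ∈ ℝ, and let E ⊆ (-∞, H_a(Y)(h)] be measurable. Then Y'(H_a(Y)⁻¹(E) ∩ (h, ∞)) = 0. -/

import Mathlib

open MeasureTheory Set

/-- Under strict fifoness, if `E ⊆ (-∞, H_a(Y)(h)]` then no user entering after `h`
can exit during `E`: for any `Y' ≤ Y` we have `Y'(H_a(Y)⁻¹(E) ∩ (h,∞)) = 0`. -/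
theorem fifo_no_late_exit (ta : Measure ℝ → C(ℝ, ℝ))
    (hfifo : ∀ (Y : Measure ℝ) (h₁ h₂ : ℝ), h₁ < h₂ → Y (Icc h₁ h₂) ≠ 0 →
      h₁ + ta Y h₁ < h₂ + ta Y h₂)
    (Y Y' : Measure ℝ) (hle : Y' ≤ Y) (h : ℝ) (E : Set ℝ) (hE : MeasurableSet E)
    (hEsub : E ⊆ Iic (h + ta Y h)) :
    Y' ((fun h' => h' + ta Y h') ⁻¹' E ∩ Ioi h) = 0 := by
  set S : Set ℝ := (fun h' => h' + ta Y h') ⁻¹' E ∩ Ioi h with hSdef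
  have hSN : ∀ x ∈ S, h < x ∧ Y (Ioc h x) = 0 := by
    rintro x ⟨hxE, hx⟩
    refine ⟨hx, ?_⟩
    by_contra hne
    have h1 : Y (Icc h x) ≠ 0 := fun h0 =>
      hne (le_antisymm ((measure_mono Ioc_subset_Icc_self).trans h0.le) zero_le)
    have hlt := hfifo Y h x hx h1
    have h2 : x + ta Y x ≤ h + ta Y h := hEsub hxE
    exact absurd hlt (not_lt.mpr h2)
  have key : Y S = 0 := by
    by_cases hmax : ∃ m ∈ S, ∀ x ∈ S, x ≤ m
    · obtain ⟨m, hm, hmax⟩ := hmax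
      have hsub : S ⊆ Ioc h m := fun x hx => ⟨(hSN x hx).1, hmax x hx⟩
      exact le_antisymm ((measure_mono hsub).trans (hSN m hm).2.le) zero_le
    · push_neg at hmax
      set C : ℚ → Set ℝ := fun q =>
        if h < (q : ℝ) ∧ Y (Ioc h (q : ℝ)) = 0 then Ioc h (q : ℝ) else ∅ with hCdef
      have hCnull : ∀ q : ℚ, Y (C q) = 0 := by
        intro q
        by_cases hq : h < (q : ℝ) ∧ Y (Ioc h (q : ℝ)) = 0
        · simp [hCdef, hq]
        · simp [hCdef, hq]
      have hsub : S ⊆ ⋃ q : ℚ, C q := by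
        intro x hx
        obtain ⟨y, hy, hxy⟩ := hmax x hx
        obtain ⟨q, hq1, hq2⟩ := exists_rat_btwn hxy
        have hhq : h < (q : ℝ) := (hSN x hx).1.trans hq1
        have hYq : Y (Ioc h (q : ℝ)) = 0 :=
          le_antisymm ((measure_mono (Ioc_subset_Ioc_right hq2.le)).trans
            (hSN y hy).2.le) zero_le
        refine mem_iUnion.mpr ⟨q, ?_⟩
        have hCq : C q = Ioc h (q : ℝ) := if_pos ⟨hhq, hYq⟩
        rw [hCq]
        exact ⟨(hSN x hx).1, hq1.le⟩
      exact le_antisymm ((measure_mono hsub).trans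
        (measure_iUnion_null hCnull).le) zero_le
  exact le_antisymm ((Measure.le_iff'.mp hle S).trans key.le) zero_le
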